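/- Let π be a random variable on a finite set with f(π) = p(x|π) > 0, define q_β(π) ∝ p(π) f(π)^β, and let g(β) = E_{q_β}[log f(π)]. Then ∫₀¹ g(β) dβ = log E_π[f(π)]. -/

import Mathlib

open Real

theorem thermodynamic_identity {S : Type*} [Fintype S] (w f : S → ℝ)
    (hw : ∀ s, 0 ≤ w s) (hw1 : ∑ s, w s = 1) (hf : ∀ s, 0 < f s) :
    ∫ β in (0 : ℝ)..1,
        (∑ s, w s * f s ^ β * Real.log (f s)) / (∑ s, w s * f s ^ β)
      = Real.log (∑ s, w s * f s) := by
  set Z : ℝ → ℝ := fun β => ∑ s, w s * f s ^ β with hZ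
  have hZpos : ∀ β : ℝ, 0 < Z β := by
    intro β
    have : ∃ s : S, 0 < w s := by
      by_contra h
      push_neg at h
      have : ∑ s, w s = 0 := Finset.sum_eq_zero fun s _ => le_antisymm (h s) (hw s)
      rw [this] at hw1; norm_num at hw1
    obtain ⟨s0, hs0⟩ := this
    refine Finset.sum_pos' (fun s _ => mul_nonneg (hw s) (Real.rpow_nonneg (hf s).le _)) ⟨s0, Finset.mem_univ _, ?_⟩
    exact mul_pos hs0 (Real.rpow_pos_of_pos (hf s0) _)
  have hZderiv : ∀ β : ℝ, HasDerivAt Z (∑ s, w s * f s ^ β * Real.log (f s)) β := by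
    intro β
    apply HasDerivAt.fun_sum
    intro s _
    have h := (Real.hasStrictDerivAt_const_rpow (hf s) β).hasDerivAt
    have := h.const_mul (w s)
    simpa [mul_assoc] using this
  have hderiv : ∀ β : ℝ,
      HasDerivAt (fun β => Real.log (Z β))
        ((∑ s, w s * f s ^ β * Real.log (f s)) / Z β) β := by
    intro β
    have := (Real.hasDerivAt_log (hZpos β).ne').comp β (hZderiv β)
    rw [div_eq_mul_inv, mul_comm]; exact this
  have hcr : ∀ s : S, Continuous fun β : ℝ => f s ^ β := fun s =>
    continuous_iff_continuousAt.2 fun β => Real.continuousAt_const_rpow (hf s).ne'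
  have hcont : Continuous fun β => (∑ s, w s * f s ^ β * Real.log (f s)) / Z β := by
    apply Continuous.div
    · exact continuous_finset_sum _ fun s _ =>
        ((continuous_const.mul (hcr s)).mul continuous_const)
    · exact continuous_finset_sum _ fun s _ => (continuous_const.mul (hcr s))
    · exact fun β => (hZpos β).ne'
  have key := intervalIntegral.integral_eq_sub_of_hasDerivAt
    (f := fun β => Real.log (Z β)) (a := (0:ℝ)) (b := 1)
    (fun β _ => hderiv β) (hcont.intervalIntegrable 0 1)
  have hZ0 : Z 0 = 1 := by simp [hZ, hw1]
  have hZ1 : Z 1 = ∑ s, w s * f s := by simp [hZ]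
  rw [key]; rw [hZ0, hZ1, Real.log_one, sub_zero]
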